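/- Newton–Gauss theorem. Let A, B, C, D be points in the Euclidean plane, no three of which are collinear. Let E be a point lying on both line AB and line CD, and let F be a point lying on both line BC and line AD. Then the midpoint of A and C, the midpoint of B and D, and the midpoint of E and F are collinear (the Newton–Gauss line of the complete quadrilateral ABCDEF). -/

import Mathlib

noncomputable section

private lemma mem_pair_aux {A B P : EuclideanSpace ℝ (Fin 2)}
    (h : P ∈ affineSpan ℝ {A, B}) : ∃ r : ℝ, P = r • (B - A) + A := by
  have h' : (P - A) +ᵥ A ∈ affineSpan ℝ {A, B} := by
    simpa [vadd_eq_add, sub_add_cancel] using h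
  obtain ⟨r, hr⟩ := vadd_left_mem_affineSpan_pair.1 h'
  exact ⟨r, by rw [vsub_eq_sub] at hr; rw [hr]; abel⟩

private lemma indep_aux {A B C : EuclideanSpace ℝ (Fin 2)}
    (h : ¬ Collinear ℝ {A, B, C}) {x y : ℝ}
    (hxy : x • (B - A) + y • (C - A) = 0) : x = 0 ∧ y = 0 := by
  by_contra hc
  apply h
  rw [collinear_iff_of_mem (Set.mem_insert A {B, C})]
  rcases eq_or_ne x 0 with hx | hx
  · have hy : y ≠ 0 := fun hy => hc ⟨hx, hy⟩
    have hCA : C = A := by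
      have h0 : y • (C - A) = 0 := by
        rw [hx] at hxy; simpa using hxy
      rcases smul_eq_zero.1 h0 with h' | h'
      · exact absurd h' hy
      · exact sub_eq_zero.1 h'
    refine ⟨B - A, fun p hp => ?_⟩
    simp only [Set.mem_insert_iff, Set.mem_singleton_iff] at hp
    rcases hp with rfl | rfl | rfl
    · exact ⟨0, by simp⟩
    · refine ⟨1, ?_⟩
      rw [vadd_eq_add, one_smul]; abel
    · exact ⟨0, by simp [hCA]⟩
  · refine ⟨C - A, fun p hp => ?_⟩
    simp only [Set.mem_insert_iff, Set.mem_singleton_iff] at hp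
    rcases hp with rfl | rfl | rfl
    · exact ⟨0, by simp⟩
    · refine ⟨-y / x, ?_⟩
      rw [vadd_eq_add]
      have hx' : x • p = x • ((-y / x) • (C - A) + A) := by
        have h1 : x • ((-y / x) • (C - A)) = (-y) • (C - A) := by
          rw [smul_smul]
          congr 1
          field_simp
        rw [smul_add, h1]
        linear_combination (norm := module) hxy
      exact smul_right_injective _ hx hx'
    · refine ⟨1, ?_⟩
      rw [vadd_eq_add, one_smul]; abel

/-- Newton–Gauss theorem: the midpoints of the three diagonals of a complete
quadrilateral are collinear. -/
theorem newton_gauss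
    (A B C D P Q : EuclideanSpace ℝ (Fin 2))
    (h₁ : ¬ Collinear ℝ {A, B, C}) (h₂ : ¬ Collinear ℝ {A, B, D})
    (h₃ : ¬ Collinear ℝ {A, C, D}) (h₄ : ¬ Collinear ℝ {B, C, D})
    (hP₁ : P ∈ affineSpan ℝ {A, B}) (hP₂ : P ∈ affineSpan ℝ {C, D})
    (hQ₁ : Q ∈ affineSpan ℝ {B, C}) (hQ₂ : Q ∈ affineSpan ℝ {A, D}) :
    Collinear ℝ {midpoint ℝ A C, midpoint ℝ B D, midpoint ℝ P Q} := by
  obtain ⟨s, hs⟩ := mem_pair_aux hP₁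
  obtain ⟨s', hs'⟩ := mem_pair_aux hP₂
  obtain ⟨t, ht⟩ := mem_pair_aux hQ₁
  obtain ⟨t', ht'⟩ := mem_pair_aux hQ₂
  have hE1 : s • (B - A) + A = s' • (D - C) + C := by rw [← hs, ← hs']
  have hE2 : t • (C - B) + B = t' • (D - A) + A := by rw [← ht, ← ht']
  -- eliminate D to get scalar relations
  have key : (t' * s - s' * (1 - t)) • (B - A) + (-(t' * (1 - s')) - s' * t) • (C - A) = 0 := by
    linear_combination (norm := module) t' • hE1 - s' • hE2
  obtain ⟨e1, e2⟩ := indep_aux h₁ key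
  -- t' ≠ 0
  have ht'0 : t' ≠ 0 := by
    intro h0
    have hs'0 : s' = 0 := by
      rw [h0] at e1 e2; linear_combination -e1 - e2
    have hPC : P = C := by rw [hs', hs'0]; simp
    have : (s : ℝ) = 0 ∧ (-1 : ℝ) = 0 := by
      apply indep_aux h₁
      have hCs : C = s • (B - A) + A := by rw [← hPC, hs]
      linear_combination (norm := module) -hCs
    exact absurd this.2 (by norm_num)
  -- t ≠ t'
  have htt' : t' - t ≠ 0 := by
    intro h0
    have heq : t = t' := by linarith [sub_eq_zero.1 h0]
    apply ht'0
    rw [heq] at e2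
    linear_combination -e2
  -- value of s
  have hsv : s * (t' - t) = 1 - t := by
    have h0 : t' * (s * (t' - t) - (1 - t)) = 0 := by
      linear_combination (t' - t) * e1 + (1 - t) * e2
    rcases mul_eq_zero.1 h0 with h' | h'
    · exact absurd h' ht'0
    · linarith
  -- express D
  have hDsub : t' • (D - A) = t • (C - B) + B - A := by
    linear_combination (norm := module) - hE2
  have hD : D = t'⁻¹ • (t • (C - B) + B - A) + A := by
    rw [← hDsub, inv_smul_smul₀ ht'0]; abel
  -- the key collinearity equation
  set k : ℝ := t' * (t - 1) / (t - t') with hk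
  have hkey : midpoint ℝ P Q = k • (midpoint ℝ B D - midpoint ℝ A C) + midpoint ℝ A C := by
    rw [midpoint_eq_smul_add, midpoint_eq_smul_add, midpoint_eq_smul_add, hs, ht, hD, hk]
    have h2 : t - t' ≠ 0 := fun h => htt' (by linarith)
    match_scalars
    · field_simp [ht'0, h2]
      linear_combination (norm := ring) (-1) * hsv
    · field_simp [ht'0, h2]
      linear_combination (norm := ring) (1) * hsv
    · field_simp [ht'0, h2]
      ring
  rw [collinear_iff_of_mem (Set.mem_insert (midpoint ℝ A C) _)]
  refine ⟨midpoint ℝ B D - midpoint ℝ A C, fun p hp => ?_⟩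
  simp only [Set.mem_insert_iff, Set.mem_singleton_iff] at hp
  rcases hp with rfl | rfl | rfl
  · exact ⟨0, by simp⟩
  · refine ⟨1, ?_⟩
    rw [vadd_eq_add, one_smul]; abel
  · exact ⟨k, by rw [vadd_eq_add, ← hkey]⟩
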